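/- Let H be a hypergraph, H_0 = H and H_{i+1} = k-cores(H_i). Then every hitting set of H of size at most k is a hitting set of H_i for every i ≤ d(H). -/

import Mathlib

/-- A sunflower with core `C`. -/
def IsSunflower {V : Type*} [DecidableEq V] (S : Finset (Finset V)) (C : Finset V) : Prop :=
  (∀ p ∈ S, C ⊂ p) ∧ ∀ p ∈ S, ∀ q ∈ S, p ≠ q → p ∩ q = C

/-- The `k`-cores of a hypergraph: cores of sunflowers with more than `k` petals. -/
def KCores {V : Type*} [DecidableEq V] (k : ℕ) (E : Set (Finset V)) : Set (Finset V) :=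
  {C | ∃ S : Finset (Finset V), ↑S ⊆ E ∧ k < S.card ∧ IsSunflower S C}

/-- The iterated core hypergraphs: `H 0 = H`, `H (i+1) = k-cores (H i)`. -/
def CoreIter {V : Type*} [DecidableEq V] (k : ℕ) (E : Set (Finset V)) : ℕ → Set (Finset V)
  | 0 => E
  | i + 1 => KCores k (CoreIter k E i)

/-- `X` is a hitting set of the hypergraph with edge set `E`. -/
def HitsAll {V : Type*} [DecidableEq V] (X : Finset V) (E : Set (Finset V)) : Prop :=
  ∀ e ∈ E, (e ∩ X).Nonempty

/-- Every hitting set of `H` of size at most `k` is a hitting set of every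
iterated core hypergraph `H_i` for `i ≤ d(H)`. -/
theorem coreIter_hitting {V : Type*} [DecidableEq V]
    (E : Set (Finset V)) (k d : ℕ) (hd : ∀ e ∈ E, e.card ≤ d)
    (X : Finset V) (hX : X.card ≤ k) (hhit : HitsAll X E) :
    ∀ i ≤ d, HitsAll X (CoreIter k E i) := by
  intro i hi
  induction i with
  | zero => exact hhit
  | succ n ih =>
    have ihn := ih (Nat.le_of_succ_le hi)
    intro C hC
    obtain ⟨S, hSE, hk, hCp, hpq⟩ := hC
    by_contra hne
    have hCX : ∀ x ∈ C, x ∉ X := by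
      intro x hx hxX
      exact hne ⟨x, Finset.mem_inter.mpr ⟨hx, hxX⟩⟩
    choose f hf using fun p (hp : p ∈ S) => ihn p (hSE hp)
    -- f assigns to each petal a point of p ∩ X
    have hinj : ∀ p hp q hq, f p hp = f q hq → p = q := by
      intro p hp q hq hfe
      by_contra hpqne
      have h1 := hf p hp
      have h2 := hf q hq
      rw [Finset.mem_inter] at h1 h2
      have : f p hp ∈ p ∩ q := Finset.mem_inter.mpr ⟨h1.1, hfe ▸ h2.1⟩
      rw [hpq p hp q hq hpqne] at this
      exact hCX _ this h1.2
    obtain ⟨p0, hp0⟩ := Finset.card_pos.mp (Nat.lt_of_le_of_lt (Nat.zero_le k) hk)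
    haveI : Nonempty V := ⟨f p0 hp0⟩
    have hcard : S.card ≤ X.card := by
      apply Finset.card_le_card_of_injOn (fun p => if hp : p ∈ S then f p hp else Classical.arbitrary _)
      · intro p hp
        simp only [Finset.mem_coe] at hp
        simp only [hp, dif_pos]
        exact (Finset.mem_inter.mp (hf p hp)).2
      · intro p hp q hq h
        simp only [Finset.mem_coe] at hp hq
        simp only [hp, hq, dif_pos] at h
        exact hinj p hp q hq h
    omega
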